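/- Let S be a finite nonempty set, p : S → S → ℝ a stochastic matrix with all entries strictly positive, and g : S → ℝ. Suppose ρ : ℝ → ℝ and V : ℝ → S → ℝ are such that for every ζ ∈ ℝ, ρ(ζ) > 0, V(ζ) is strictly positive, and V(ζ)(i) = (exp(ζ·g(i))/ρ(ζ)) · Σ_j p(i,j)·V(ζ)(j) for all i. Then the function ζ ↦ log ρ(ζ) is convex on ℝ. -/

import Mathlib

/-- If for every `ζ ∈ ℝ` the pair `(ρ ζ, V ζ)` solves the multiplicative
Poisson equation with `ρ ζ > 0` and `V ζ` strictly positive, then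
`ζ ↦ log (ρ ζ)` is convex on `ℝ`. -/
theorem log_rho_convex
    {S : Type*} [Fintype S] [Nonempty S]
    (p : S → S → ℝ)
    (hp_pos : ∀ i j, 0 < p i j)
    (hp_row : ∀ i, ∑ j, p i j = 1)
    (g : S → ℝ)
    (ρ : ℝ → ℝ) (V : ℝ → S → ℝ)
    (hρ : ∀ ζ : ℝ, 0 < ρ ζ)
    (hV : ∀ ζ : ℝ, ∀ i, 0 < V ζ i)
    (heq : ∀ ζ : ℝ, ∀ i,
      V ζ i = (Real.exp (ζ * g i) / ρ ζ) * ∑ j, p i j * V ζ j) :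
    ConvexOn ℝ Set.univ (fun ζ : ℝ => Real.log (ρ ζ)) := by
  -- rewrite the Poisson equation multiplicatively
  have heq' : ∀ ζ i, ρ ζ * V ζ i = Real.exp (ζ * g i) * ∑ j, p i j * V ζ j := by
    intro ζ i
    rw [heq ζ i]
    field_simp
    rw [mul_comm, mul_div_assoc, div_self (hρ ζ).ne', mul_one]
  refine ⟨convex_univ, ?_⟩
  intro x _ y _ a b ha hb hab
  simp only [smul_eq_mul]
  set ζ := a * x + b * y with hζ
  set W : S → ℝ := fun i => V x i ^ a * V y i ^ b with hW
  set r : ℝ := ρ x ^ a * ρ y ^ b with hr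
  have hWpos : ∀ i, 0 < W i := fun i =>
    mul_pos (Real.rpow_pos_of_pos (hV x i) a) (Real.rpow_pos_of_pos (hV y i) b)
  have hrpos : 0 < r :=
    mul_pos (Real.rpow_pos_of_pos (hρ x) a) (Real.rpow_pos_of_pos (hρ y) b)
  -- subinvariance: exp(ζ g i) * Σ p W ≤ r * W i
  have hsub : ∀ i, Real.exp (ζ * g i) * ∑ j, p i j * W j ≤ r * W i := by
    intro i
    set A : ℝ := ∑ j, p i j * V x j with hA
    set B : ℝ := ∑ j, p i j * V y j with hB
    have hApos : 0 < A := Finset.sum_pos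
      (fun j _ => mul_pos (hp_pos i j) (hV x j)) Finset.univ_nonempty
    have hBpos : 0 < B := Finset.sum_pos
      (fun j _ => mul_pos (hp_pos i j) (hV y j)) Finset.univ_nonempty
    -- Hölder step
    have hHolder : ∑ j, p i j * W j ≤ A ^ a * B ^ b := by
      have hterm : ∀ j, p i j * W j ≤
          A ^ a * B ^ b * (p i j * (a * (V x j / A) + b * (V y j / B))) := by
        intro j
        have hgm : (V x j / A) ^ a * (V y j / B) ^ b ≤
            a * (V x j / A) + b * (V y j / B) :=
          Real.geom_mean_le_arith_mean2_weighted ha hb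
            (div_nonneg (hV x j).le hApos.le) (div_nonneg (hV y j).le hBpos.le) hab
        have hWj : W j = A ^ a * B ^ b * ((V x j / A) ^ a * (V y j / B) ^ b) := by
          rw [hW]
          rw [Real.div_rpow (hV x j).le hApos.le, Real.div_rpow (hV y j).le hBpos.le]
          field_simp [(Real.rpow_pos_of_pos hApos a).ne', (Real.rpow_pos_of_pos hBpos b).ne']
        rw [hWj]
        have hAB : 0 ≤ A ^ a * B ^ b :=
          (mul_pos (Real.rpow_pos_of_pos hApos a) (Real.rpow_pos_of_pos hBpos b)).le
        calc p i j * (A ^ a * B ^ b * ((V x j / A) ^ a * (V y j / B) ^ b))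
            ≤ p i j * (A ^ a * B ^ b * (a * (V x j / A) + b * (V y j / B))) := by
              apply mul_le_mul_of_nonneg_left _ (hp_pos i j).le
              exact mul_le_mul_of_nonneg_left hgm hAB
          _ = A ^ a * B ^ b * (p i j * (a * (V x j / A) + b * (V y j / B))) := by ring
      calc ∑ j, p i j * W j
          ≤ ∑ j, A ^ a * B ^ b * (p i j * (a * (V x j / A) + b * (V y j / B))) :=
            Finset.sum_le_sum fun j _ => hterm j
        _ = A ^ a * B ^ b := by
            rw [← Finset.mul_sum]
            have : ∑ j, p i j * (a * (V x j / A) + b * (V y j / B)) = 1 := by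
              have : ∑ j, p i j * (a * (V x j / A) + b * (V y j / B))
                  = a / A * ∑ j, p i j * V x j + b / B * ∑ j, p i j * V y j := by
                rw [Finset.mul_sum, Finset.mul_sum, ← Finset.sum_add_distrib]
                congr 1; funext j; field_simp
              rw [this, ← hA, ← hB]
              field_simp
              exact hab
            rw [this, mul_one]
    -- split the exponential
    have hexp : Real.exp (ζ * g i) = Real.exp (x * g i) ^ a * Real.exp (y * g i) ^ b := by
      rw [Real.rpow_def_of_pos (Real.exp_pos _), Real.rpow_def_of_pos (Real.exp_pos _),
        Real.log_exp, Real.log_exp, ← Real.exp_add, hζ]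
      ring_nf
    calc Real.exp (ζ * g i) * ∑ j, p i j * W j
        ≤ Real.exp (ζ * g i) * (A ^ a * B ^ b) :=
          mul_le_mul_of_nonneg_left hHolder (Real.exp_pos _).le
      _ = (Real.exp (x * g i) * A) ^ a * (Real.exp (y * g i) * B) ^ b := by
          rw [hexp, Real.mul_rpow (Real.exp_pos _).le hApos.le,
            Real.mul_rpow (Real.exp_pos _).le hBpos.le]
          ring
      _ = (ρ x * V x i) ^ a * (ρ y * V y i) ^ b := by
          rw [← heq' x i, ← heq' y i]
      _ = r * W i := by
          rw [Real.mul_rpow (hρ x).le (hV x i).le, Real.mul_rpow (hρ y).le (hV y i).le]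
          ring
  -- Perron comparison: ρ ζ ≤ r
  obtain ⟨i₀, -, hi₀⟩ := Finset.exists_max_image Finset.univ
    (fun i => V ζ i / W i) Finset.univ_nonempty
  have hc : ∀ j, V ζ j ≤ V ζ i₀ / W i₀ * W j := by
    intro j
    have := hi₀ j (Finset.mem_univ j)
    rw [div_le_div_iff₀ (hWpos j) (hWpos i₀)] at this
    rw [div_mul_eq_mul_div, le_div_iff₀ (hWpos i₀)]
    linarith
  have hkey : ρ ζ * V ζ i₀ ≤ r * V ζ i₀ := by
    have h1 : ∑ j, p i₀ j * V ζ j ≤ V ζ i₀ / W i₀ * ∑ j, p i₀ j * W j := by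
      rw [Finset.mul_sum]
      refine Finset.sum_le_sum fun j _ => ?_
      calc p i₀ j * V ζ j ≤ p i₀ j * (V ζ i₀ / W i₀ * W j) :=
            mul_le_mul_of_nonneg_left (hc j) (hp_pos i₀ j).le
        _ = V ζ i₀ / W i₀ * (p i₀ j * W j) := by ring
    calc ρ ζ * V ζ i₀ = Real.exp (ζ * g i₀) * ∑ j, p i₀ j * V ζ j := heq' ζ i₀
      _ ≤ Real.exp (ζ * g i₀) * (V ζ i₀ / W i₀ * ∑ j, p i₀ j * W j) :=
          mul_le_mul_of_nonneg_left h1 (Real.exp_pos _).le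
      _ = V ζ i₀ / W i₀ * (Real.exp (ζ * g i₀) * ∑ j, p i₀ j * W j) := by ring
      _ ≤ V ζ i₀ / W i₀ * (r * W i₀) :=
          mul_le_mul_of_nonneg_left (hsub i₀)
            (div_nonneg (hV ζ i₀).le (hWpos i₀).le)
      _ = r * V ζ i₀ := by
          field_simp [(hWpos i₀).ne']
  have hρr : ρ ζ ≤ r := le_of_mul_le_mul_right
    (by linarith [hkey]) (hV ζ i₀)
  calc Real.log (ρ ζ) ≤ Real.log r := Real.log_le_log (hρ ζ) hρr
    _ = a * Real.log (ρ x) + b * Real.log (ρ y) := by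
        rw [hr, Real.log_mul (Real.rpow_pos_of_pos (hρ x) a).ne'
          (Real.rpow_pos_of_pos (hρ y) b).ne',
          Real.log_rpow (hρ x), Real.log_rpow (hρ y)]
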